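/- Let n be an odd positive integer. The number of pairs (d, ℓ) where d is a divisor of n with n | d² and ℓ is a residue class modulo d²/n satisfying ℓ² ≡ 1 (mod d²/n), equals the number of divisors of n. -/

import Mathlib

private lemma two_dvd_contra {t u : ℕ} (ht : t ∣ 2) (htu : t ∣ u) (hu : Odd u) : t = 1 := by
  rcases (Nat.dvd_prime Nat.prime_two).mp ht with hh | hh
  · exact hh
  · rw [hh] at htu
    rw [Nat.odd_iff] at hu
    omega

private lemma odd_of_dvd {n m : ℕ} (hodd : Odd n) (h : m ∣ n) : Odd m := by
  rw [Nat.odd_iff] at hodd ⊢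
  by_contra hne
  have h2 : 2 ∣ m := by omega
  have := h2.trans h
  omega

private lemma gcd_factor {m : ℕ} (hm : Odd m) {k : ℤ} (h : (m:ℤ) ∣ k^2 - 1) :
    (Int.gcd (m:ℤ) (k+1)) * (Int.gcd (m:ℤ) (k-1)) = m ∧
    Nat.Coprime (Int.gcd (m:ℤ) (k+1)) (Int.gcd (m:ℤ) (k-1)) := by
  set u := Int.gcd (m:ℤ) (k+1) with hu
  set v := Int.gcd (m:ℤ) (k-1) with hv
  have hu1 : (u:ℤ) ∣ k+1 := Int.gcd_dvd_right (m:ℤ) (k+1)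
  have hv1 : (v:ℤ) ∣ k-1 := Int.gcd_dvd_right (m:ℤ) (k-1)
  have hum : u ∣ m := Int.natCast_dvd_natCast.mp (Int.gcd_dvd_left (m:ℤ) (k+1))
  have hvm : v ∣ m := Int.natCast_dvd_natCast.mp (Int.gcd_dvd_left (m:ℤ) (k-1))
  have hco : Nat.Coprime u v := by
    have htu : ((Nat.gcd u v : ℕ):ℤ) ∣ k+1 :=
      (Int.natCast_dvd_natCast.mpr (Nat.gcd_dvd_left u v)).trans hu1
    have htv : ((Nat.gcd u v : ℕ):ℤ) ∣ k-1 :=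
      (Int.natCast_dvd_natCast.mpr (Nat.gcd_dvd_right u v)).trans hv1
    have ht2 : ((Nat.gcd u v : ℕ):ℤ) ∣ 2 := by
      have := dvd_sub htu htv
      simpa using this
    have ht2' : Nat.gcd u v ∣ 2 := by exact_mod_cast ht2
    exact two_dvd_contra ht2' ((Nat.gcd_dvd_left u v).trans hum) hm
  refine ⟨?_, hco⟩
  have h1 : u * v ∣ m := Nat.Coprime.mul_dvd_of_dvd_of_dvd hco hum hvm
  have h2 : m ∣ u * v := by
    have hmx : m ∣ ((k+1)*(k-1)).natAbs :=
      Int.natCast_dvd.mp (by rwa [(by ring : (k+1)*(k-1) = k^2-1)])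
    have key : Nat.gcd m (((k+1)*(k-1)).natAbs) = m := Nat.gcd_eq_left hmx
    have key2 : Nat.gcd m (((k+1)*(k-1)).natAbs) ∣
        Nat.gcd m (k+1).natAbs * Nat.gcd m (k-1).natAbs := by
      rw [Int.natAbs_mul]
      exact gcd_mul_dvd_mul_gcd m _ _
    rw [key] at key2
    exact key2
  exact Nat.dvd_antisymm h1 h2

private lemma gcd_recover {u v : ℕ} (huo : Odd u) {k : ℤ}
    (h1 : (u:ℤ) ∣ k + 1) (h2 : (v:ℤ) ∣ k - 1) :
    Int.gcd ((u*v : ℕ):ℤ) (k - 1) = v := by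
  have hG : Int.gcd ((u*v : ℕ):ℤ) (k - 1) = Nat.gcd (u*v) (k-1).natAbs := by
    simp [Int.gcd, Int.natAbs_mul]
  rw [hG]
  have hvd : v ∣ Nat.gcd (u*v) (k-1).natAbs :=
    Nat.dvd_gcd (dvd_mul_left v u) (Int.natCast_dvd.mp h2)
  have hdv : Nat.gcd (u*v) (k-1).natAbs ∣ v := by
    have hGco : Nat.Coprime (Nat.gcd (u*v) (k-1).natAbs) u := by
      have htk1 : ((Nat.gcd (Nat.gcd (u*v) (k-1).natAbs) u : ℕ):ℤ) ∣ k - 1 :=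
        Int.natCast_dvd.mpr ((Nat.gcd_dvd_left _ u).trans (Nat.gcd_dvd_right _ _))
      have htk2 : ((Nat.gcd (Nat.gcd (u*v) (k-1).natAbs) u : ℕ):ℤ) ∣ k + 1 :=
        (Int.natCast_dvd_natCast.mpr (Nat.gcd_dvd_right _ u)).trans h1
      have ht2 : ((Nat.gcd (Nat.gcd (u*v) (k-1).natAbs) u : ℕ):ℤ) ∣ 2 := by
        have := dvd_sub htk2 htk1
        simpa using this
      have ht2' : Nat.gcd (Nat.gcd (u*v) (k-1).natAbs) u ∣ 2 := by exact_mod_cast ht2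
      exact two_dvd_contra ht2' (Nat.gcd_dvd_right _ u) huo
    exact Nat.Coprime.dvd_of_dvd_mul_left hGco (Nat.gcd_dvd_left _ _)
  exact Nat.dvd_antisymm hdv hvd

private lemma decomp {n : ℕ} (hodd : Odd n) (hpos : 0 < n) {d : ℕ} {l : ℤ}
    (hd : d ∣ n) (hn : n ∣ d^2) (hl2 : l^2 ≡ 1 [ZMOD ((d^2/n : ℕ):ℤ)]) :
    ∃ c u v : ℕ, 0 < c ∧ 0 < u ∧ 0 < v ∧ Nat.Coprime u v ∧
      n = (c*u) * (c*v) ∧ d = c*(u*v) ∧ d^2/n = u*v ∧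
      (u:ℤ) ∣ l + 1 ∧ (v:ℤ) ∣ l - 1 ∧
      Int.gcd ((u*v : ℕ):ℤ) (l-1) = v := by
  have hdpos : 0 < d := Nat.pos_of_dvd_of_pos hd hpos
  have hdm : d^2 = n * (d^2/n) := (Nat.mul_div_cancel' hn).symm
  set m := d^2/n with hm
  have hmpos : 0 < m := by
    rcases Nat.eq_zero_or_pos m with h0 | h
    · rw [h0, mul_zero] at hdm
      exact absurd hdm (pow_ne_zero 2 hdpos.ne')
    · exact h
  have hc : n = d * (n/d) := (Nat.mul_div_cancel' hd).symm
  set c := n/d with hcdef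
  have hcpos : 0 < c := by
    rcases Nat.eq_zero_or_pos c with h0 | h
    · rw [h0, mul_zero] at hc; omega
    · exact h
  have hdcm : d = c * m := by
    have hdd : d * d = d * (c * m) := by
      rw [← pow_two, hdm, hc]; ring
    exact Nat.eq_of_mul_eq_mul_left hdpos hdd
  have hmn : m ∣ n := (Dvd.intro_left c hdcm.symm).trans hd
  have hmodd : Odd m := odd_of_dvd hodd hmn
  have hdl : (m:ℤ) ∣ l^2 - 1 := by
    have h := Int.ModEq.dvd hl2
    rwa [show (1:ℤ) - l^2 = -(l^2-1) by ring, dvd_neg] at h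
  obtain ⟨hprod, hco⟩ := gcd_factor hmodd hdl
  set u := Int.gcd (m:ℤ) (l+1) with hudef
  set v := Int.gcd (m:ℤ) (l-1) with hvdef
  have hupos : 0 < u := by
    rcases Nat.eq_zero_or_pos u with h0 | h
    · rw [h0, zero_mul] at hprod; omega
    · exact h
  have hvpos : 0 < v := by
    rcases Nat.eq_zero_or_pos v with h0 | h
    · rw [h0, mul_zero] at hprod; omega
    · exact h
  refine ⟨c, u, v, hcpos, hupos, hvpos, hco, ?_, ?_, ?_, Int.gcd_dvd_right (m:ℤ) (l+1),
    Int.gcd_dvd_right (m:ℤ) (l-1), ?_⟩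
  · rw [hc, hdcm, ← hprod]; ring
  · rw [hdcm, ← hprod]
  · exact hprod.symm
  · rw [hprod]

theorem Btilde_count (n : ℕ) (hodd : Odd n) (hpos : 0 < n) :
    Nat.card {p : ℕ × ℤ // p.1 ∣ n ∧ n ∣ p.1 ^ 2 ∧ 0 ≤ p.2 ∧
      p.2 < ((p.1 ^ 2 / n : ℕ) : ℤ) ∧ p.2 ^ 2 ≡ 1 [ZMOD ((p.1 ^ 2 / n : ℕ) : ℤ)]} =
    n.divisors.card := by
  rw [← Nat.card_eq_finsetCard]
  refine Nat.card_eq_of_bijective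
    (fun p => ⟨p.1.1 / Int.gcd ((p.1.1 ^ 2 / n : ℕ) : ℤ) (p.1.2 - 1), ?_⟩) ⟨?_, ?_⟩
  · -- membership
    obtain ⟨⟨d, l⟩, hp⟩ := p
    dsimp only at hp ⊢
    obtain ⟨c, u, v, hcpos, hupos, hvpos, hco, hn', hd', hm', hul, hvl, hgcd⟩ :=
      decomp hodd hpos hp.1 hp.2.1 hp.2.2.2.2
    rw [hm', hgcd]
    have hdv : d / v = c * u := by
      rw [hd', show c*(u*v) = (c*u)*v from by ring, Nat.mul_div_cancel _ hvpos]
    rw [hdv, Nat.mem_divisors]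
    exact ⟨⟨c*v, hn'⟩, hpos.ne'⟩
  · -- injective
    rintro ⟨⟨d, l⟩, hp⟩ ⟨⟨d', l'⟩, hq⟩ hpq
    dsimp only at hp hq
    simp only [Subtype.mk.injEq] at hpq
    obtain ⟨c, u, v, hcpos, hupos, hvpos, hco, hn1, hd1, hm1, hul1, hvl1, hgcd1⟩ :=
      decomp hodd hpos hp.1 hp.2.1 hp.2.2.2.2
    obtain ⟨c', u', v', hcpos', hupos', hvpos', hco', hn2, hd2, hm2, hul2, hvl2, hgcd2⟩ :=
      decomp hodd hpos hq.1 hq.2.1 hq.2.2.2.2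
    rw [hm1, hgcd1, hm2, hgcd2] at hpq
    have hdv1 : d / v = c * u := by
      rw [hd1, show c*(u*v) = (c*u)*v from by ring, Nat.mul_div_cancel _ hvpos]
    have hdv2 : d' / v' = c' * u' := by
      rw [hd2, show c'*(u'*v') = (c'*u')*v' from by ring, Nat.mul_div_cancel _ hvpos']
    rw [hdv1, hdv2] at hpq
    have heq2 : c * v = c' * v' := by
      have h := hn1.symm.trans hn2
      rw [hpq] at h
      exact Nat.eq_of_mul_eq_mul_left (by positivity) h
    have hcc : c = c' := by
      have h1 : Nat.gcd (c*u) (c*v) = c := by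
        rw [Nat.gcd_mul_left, hco, mul_one]
      have h2 : Nat.gcd (c'*u') (c'*v') = c' := by
        rw [Nat.gcd_mul_left, hco', mul_one]
      rw [← h1, ← h2, hpq, heq2]
    have huu : u = u' := by
      rw [hcc] at hpq
      exact Nat.eq_of_mul_eq_mul_left hcpos' hpq
    have hvv : v = v' := by
      rw [hcc] at heq2
      exact Nat.eq_of_mul_eq_mul_left hcpos' heq2
    have hdd : d = d' := by rw [hd1, hd2, hcc, huu, hvv]
    have hll : l = l' := by
      have hu' : (u:ℤ) ∣ l - l' := by
        have := dvd_sub hul1 (huu ▸ hul2)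
        simpa using this
      have hv' : (v:ℤ) ∣ l - l' := by
        have := dvd_sub hvl1 (hvv ▸ hvl2)
        simpa using this
      have hcop : IsCoprime (u:ℤ) (v:ℤ) := Nat.isCoprime_iff_coprime.mpr hco
      have huv : ((u*v : ℕ):ℤ) ∣ l - l' := by
        push_cast
        exact hcop.mul_dvd hu' hv'
      have hb1 : l < ((u*v : ℕ):ℤ) := hm1 ▸ hp.2.2.2.1
      have hb2 : l' < ((u*v : ℕ):ℤ) := by
        have := hq.2.2.2.1
        rw [hm2, ← huu, ← hvv] at this
        exact this
      have h0 : 0 ≤ l := hp.2.2.1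
      have h0' : 0 ≤ l' := hq.2.2.1
      have : l - l' = 0 := by
        refine Int.eq_zero_of_abs_lt_dvd huv ?_
        rw [abs_sub_lt_iff]
        omega
      omega
    exact Subtype.ext (Prod.ext hdd hll)
  · -- surjective
    rintro ⟨e, he⟩
    rw [Nat.mem_divisors] at he
    have hepos : 0 < e := Nat.pos_of_dvd_of_pos he.1 hpos
    have hef : n = e * (n/e) := (Nat.mul_div_cancel' he.1).symm
    set f := n/e with hfdef
    have hfpos : 0 < f := by
      rcases Nat.eq_zero_or_pos f with h0 | h
      · rw [h0, mul_zero] at hef; omega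
      · exact h
    set c := Nat.gcd e f with hcdef
    have hcpos : 0 < c := Nat.gcd_pos_of_pos_left f hepos
    have hue : e = c * (e/c) := (Nat.mul_div_cancel' (Nat.gcd_dvd_left e f)).symm
    have hvf : f = c * (f/c) := (Nat.mul_div_cancel' (Nat.gcd_dvd_right e f)).symm
    set u := e/c with hudef
    set v := f/c with hvdef
    have hco : Nat.Coprime u v := Nat.coprime_div_gcd_div_gcd hcpos
    have hupos : 0 < u := by
      rcases Nat.eq_zero_or_pos u with h0 | h
      · rw [h0, mul_zero] at hue; omega
      · exact h
    have hvpos : 0 < v := by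
      rcases Nat.eq_zero_or_pos v with h0 | h
      · rw [h0, mul_zero] at hvf; omega
      · exact h
    have huodd : Odd u := odd_of_dvd hodd ((Dvd.intro_left c hue.symm).trans he.1)
    set k := (Nat.chineseRemainder hco (u-1) 1 : ℕ) with hkdef
    have hk1 : k ≡ u-1 [MOD u] := (Nat.chineseRemainder hco (u-1) 1).2.1
    have hk2 : k ≡ 1 [MOD v] := (Nat.chineseRemainder hco (u-1) 1).2.2
    have hklt : k < u * v :=
      Nat.chineseRemainder_lt_mul hco (u-1) 1 hupos.ne' hvpos.ne'
    have hku : (u:ℤ) ∣ (k:ℤ) + 1 := by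
      have h1 : k + 1 ≡ (u-1) + 1 [MOD u] := hk1.add_right 1
      rw [Nat.sub_add_cancel hupos] at h1
      have h2 : k + 1 ≡ 0 [MOD u] := h1.trans ((Nat.modEq_zero_iff_dvd).mpr dvd_rfl)
      have h3 : u ∣ k + 1 := (Nat.modEq_zero_iff_dvd).mp h2
      exact_mod_cast Int.natCast_dvd_natCast.mpr h3
    have hkv : (v:ℤ) ∣ (k:ℤ) - 1 := by
      have hk2' : k % v = 1 % v := hk2
      have h1 : (k:ℤ) % (v:ℤ) = 1 % (v:ℤ) := by
        have h := congrArg (fun x : ℕ => (x:ℤ)) hk2'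
        push_cast at h
        exact h
      have h2 : (k:ℤ) ≡ 1 [ZMOD (v:ℤ)] := h1
      have h3 := Int.ModEq.dvd h2
      rwa [show (1:ℤ) - k = -((k:ℤ)-1) by ring, dvd_neg] at h3
    set d := c * (u*v) with hddef
    have hnfact : n = (c*u) * (c*v) := by rw [hef, hue, hvf]
    have hd2 : d^2 = n * (u*v) := by rw [hnfact]; ring
    have hm : d^2/n = u*v := by rw [hd2, Nat.mul_div_cancel_left _ hpos]
    refine ⟨⟨⟨d, (k:ℤ)⟩, ⟨c, by rw [hnfact]; ring⟩, ⟨u*v, hd2⟩, Int.natCast_nonneg k,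
      ?_, ?_⟩, ?_⟩
    · simp only [hm]
      exact_mod_cast hklt
    · simp only [hm]
      have hdvd : ((u*v : ℕ):ℤ) ∣ (k:ℤ)^2 - 1 := by
        have h := mul_dvd_mul hku hkv
        rw [show ((k:ℤ)+1)*((k:ℤ)-1) = (k:ℤ)^2-1 by ring] at h
        exact_mod_cast h
      exact (Int.modEq_iff_dvd.mpr hdvd).symm
    · apply Subtype.ext
      simp only
      rw [hm, gcd_recover huodd hku hkv, hddef,
        show c*(u*v) = (c*u)*v from by ring, Nat.mul_div_cancel _ hvpos, ← hue]
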